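/- (Zero-rate concurrent detection achievability, M hypotheses.) With the typicality-based scheme where the sensor announces which hypothesis m (if any) makes x^n ∈ T_μ(P_X^{(m)}), Detector 1 declares m̂₁ = m iff additionally y₁^n ∈ T_{μ'}(P_{Y₁}^{(m)}) (else declares 1), and Detector 2 declares m̂₂ = m iff additionally y₂^n ∈ T_{μ''}(P_{Y₂}^{(m)}) (else declares 2), the type-II error at Detector 1 satisfies β₁ ≤ Σ_{m≠1} exp[-n(min{D(Q_{XY₁}||P^{(1)}_{XY₁}) : |Q_X - P_X^{(m)}| ≤ μ, |Q_{Y₁} - P_{Y₁}^{(m)}| ≤ μ'} - o(1))], yielding in the limit μ,μ',μ''→0 the exponent θ₁ = min_{m≠1} min{D(Q_{XY₁}||P^{(1)}_{XY₁}) : Q_X = P_X^{(m)}, Q_{Y₁} = P_{Y₁}^{(m)}}. -/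

import Mathlib

open Finset Real Filter
open scoped Classical BigOperators

noncomputable section

/-- `p` is a probability mass function on the finite type `α`. -/
def IsPMF {α : Type*} [Fintype α] (p : α → ℝ) : Prop :=
  (∀ a, 0 ≤ p a) ∧ ∑ a, p a = 1

/-- Kullback-Leibler divergence between two pmfs on a finite type. -/
def klD {α : Type*} [Fintype α] (p q : α → ℝ) : ℝ :=
  ∑ a, p a * Real.log (p a / q a)

/-- Distribution (pushforward) of the random variable `f` under pmf `μ`. -/
def pdist {Ω α : Type*} [Fintype Ω] (μ : Ω → ℝ) (f : Ω → α) : α → ℝ :=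
  fun a => ∑ ω, if f ω = a then μ ω else 0

/-- Shannon entropy (nats) of the random variable `f` under `μ`. -/
def entOf {Ω α : Type*} [Fintype Ω] [Fintype α] (μ : Ω → ℝ) (f : Ω → α) : ℝ :=
  -∑ a, pdist μ f a * Real.log (pdist μ f a)

/-- Mutual information `I(f; g)` under `μ`. -/
def miOf {Ω α β : Type*} [Fintype Ω] [Fintype α] [Fintype β]
    (μ : Ω → ℝ) (f : Ω → α) (g : Ω → β) : ℝ :=
  entOf μ f + entOf μ g - entOf μ (fun ω => (f ω, g ω))

/-- Conditional mutual information `I(f; g | h)` under `μ`. -/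
def cmiOf {Ω α β γ : Type*} [Fintype Ω] [Fintype α] [Fintype β] [Fintype γ]
    (μ : Ω → ℝ) (f : Ω → α) (g : Ω → β) (h : Ω → γ) : ℝ :=
  entOf μ (fun ω => (f ω, h ω)) + entOf μ (fun ω => (g ω, h ω))
    - entOf μ (fun ω => (f ω, g ω, h ω)) - entOf μ h

/-- Empirical distribution of a length-`n` sequence. -/
def emp {α : Type*} [Fintype α] {n : ℕ} (z : Fin n → α) : α → ℝ :=
  fun a => ((Finset.univ.filter fun t => z t = a).card : ℝ) / n

/-- `δ`-typicality w.r.t. a pmf. -/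
def Typ {α : Type*} [Fintype α] {n : ℕ} (δ : ℝ) (p : α → ℝ) (z : Fin n → α) : Prop :=
  ∀ a, |emp z a - p a| ≤ δ

section Model

variable {𝒳 𝒴₁ : Type*} [Fintype 𝒳] [Fintype 𝒴₁]

/-- X-marginal of a pmf on `𝒳 × 𝒴₁`. -/
def mX (p : 𝒳 × 𝒴₁ → ℝ) : 𝒳 → ℝ := fun x => ∑ y1, p (x, y1)

/-- Y₁-marginal of a pmf on `𝒳 × 𝒴₁`. -/
def mY1 (p : 𝒳 × 𝒴₁ → ℝ) : 𝒴₁ → ℝ := fun y1 => ∑ x, p (x, y1)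

/-- Type-II error of Detector 1 in the typicality scheme: probability, under
hypothesis `1` (index `0`), of the union over `m ≠ 1` of the events
`{xⁿ ∈ T_μ(P_X^{(m)}), y₁ⁿ ∈ T_{μ'}(P_{Y₁}^{(m)})}`. -/
def β1 {Mh : ℕ} (P : Fin Mh → 𝒳 × 𝒴₁ → ℝ) (h1 : Fin Mh) (n : ℕ) (μ μ' : ℝ) : ℝ :=
  ∑ x : Fin n → 𝒳, ∑ y1 : Fin n → 𝒴₁,
    if ∃ m, m ≠ h1 ∧ Typ μ (mX (P m)) x ∧ Typ μ' (mY1 (P m)) y1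
      then ∏ t, P h1 (x t, y1 t) else 0

end Model


section AuxSeq

variable {α : Type*} [Fintype α] {n : ℕ}

lemma emp_nonneg (z : Fin n → α) (a : α) : 0 ≤ emp z a := by
  unfold emp; positivity

lemma sum_emp (hn : 0 < n) (z : Fin n → α) : ∑ a, emp z a = 1 := by
  unfold emp
  rw [← Finset.sum_div, ← Nat.cast_sum,
    ← Finset.card_eq_sum_card_fiberwise (fun t _ => Finset.mem_univ (z t))]
  simp [Finset.card_fin]
  omega

lemma prod_comp_eq (z : Fin n → α) (f : α → ℝ) :
    ∏ t, f (z t) = ∏ a, f a ^ (Finset.univ.filter fun t => z t = a).card := by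
  rw [← Finset.prod_fiberwise_of_maps_to (fun t _ => Finset.mem_univ (z t)) (fun t => f (z t))]
  refine Finset.prod_congr rfl fun a _ => ?_
  rw [Finset.prod_congr rfl (fun t ht => ?_), Finset.prod_const]
  exact congrArg f (Finset.mem_filter.mp ht).2

lemma key_identity (hn : 0 < n) (p : α → ℝ) (hp : ∀ a, 0 < p a) (z : Fin n → α) :
    ∏ t, p (z t) = Real.exp (-(n:ℝ) * klD (emp z) p) * ∏ t, emp z (z t) := by
  have hn' : (n:ℝ) ≠ 0 := by positivity
  rw [prod_comp_eq z p, prod_comp_eq z (emp z)]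
  unfold klD
  rw [Finset.mul_sum, Real.exp_sum, ← Finset.prod_mul_distrib]
  refine Finset.prod_congr rfl fun a _ => ?_
  set k := (Finset.univ.filter fun t => z t = a).card with hk
  have hemp : emp z a = (k:ℝ)/n := rfl
  rcases Nat.eq_zero_or_pos k with h0 | hkpos
  · simp [hemp, h0]
  · have hq : (0:ℝ) < (k:ℝ)/n := by positivity
    have harg : -(n:ℝ) * (emp z a * Real.log (emp z a / p a))
        = (k:ℝ) * Real.log (p a / ((k:ℝ)/n)) := by
      rw [hemp, Real.log_div (ne_of_gt hq) (ne_of_gt (hp a)),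
        Real.log_div (ne_of_gt (hp a)) (ne_of_gt hq)]
      field_simp
      ring
    rw [harg, Real.exp_nat_mul, Real.exp_log (div_pos (hp a) hq),
      hemp, ← mul_pow, div_mul_cancel₀ _ (ne_of_gt hq)]

/-- Sum of the i.i.d. probability over any set of sequences with common empirical
distribution `Q` is at most `exp(-n D(Q‖p))`. -/
lemma fiber_sum_le (hn : 0 < n) (p : α → ℝ) (hp : ∀ a, 0 < p a)
    (s : Finset (Fin n → α)) (Q : α → ℝ) (hs : ∀ z ∈ s, emp z = Q) :
    ∑ z ∈ s, ∏ t, p (z t) ≤ Real.exp (-(n:ℝ) * klD Q p) := by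
  rcases s.eq_empty_or_nonempty with rfl | ⟨z₀, hz₀⟩
  · simp [Real.exp_pos, le_of_lt]
  have hQ : Q = emp z₀ := (hs z₀ hz₀).symm
  have hQnn : ∀ a, 0 ≤ Q a := fun a => hQ ▸ emp_nonneg z₀ a
  have hQ1 : ∑ a, Q a = 1 := hQ ▸ sum_emp hn z₀
  calc ∑ z ∈ s, ∏ t, p (z t)
      = ∑ z ∈ s, Real.exp (-(n:ℝ) * klD Q p) * ∏ t, Q (z t) := by
        refine Finset.sum_congr rfl fun z hz => ?_
        rw [← hs z hz, key_identity hn p hp z]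
    _ = Real.exp (-(n:ℝ) * klD Q p) * ∑ z ∈ s, ∏ t, Q (z t) := by
        rw [Finset.mul_sum]
    _ ≤ Real.exp (-(n:ℝ) * klD Q p) * 1 := by
        refine mul_le_mul_of_nonneg_left ?_ (Real.exp_pos _).le
        calc ∑ z ∈ s, ∏ t, Q (z t)
            ≤ ∑ z : Fin n → α, ∏ t, Q (z t) :=
              Finset.sum_le_sum_of_subset_of_nonneg (Finset.subset_univ s)
                (fun z _ _ => Finset.prod_nonneg fun t _ => hQnn _)
          _ = (∑ a, Q a) ^ n := (Fintype.sum_pow Q n).symm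
          _ = 1 := by rw [hQ1, one_pow]
    _ = Real.exp (-(n:ℝ) * klD Q p) := mul_one _

/-- Nonnegativity of KL divergence. -/
lemma klD_nonneg (Q p : α → ℝ) (hQ : IsPMF Q) (hp : ∀ a, 0 < p a) (hp1 : ∑ a, p a = 1) :
    0 ≤ klD Q p := by
  unfold klD
  have key : ∀ a, Q a * Real.log (p a / Q a) ≤ p a - Q a := by
    intro a
    rcases eq_or_lt_of_le (hQ.1 a) with h0 | hpos
    · simp [← h0]; exact (hp a).le
    · have h1 : Real.log (p a / Q a) ≤ p a / Q a - 1 :=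
        Real.log_le_sub_one_of_pos (div_pos (hp a) hpos)
      calc Q a * Real.log (p a / Q a) ≤ Q a * (p a / Q a - 1) :=
            mul_le_mul_of_nonneg_left h1 hpos.le
        _ = p a - Q a := by field_simp
  have h2 : ∑ a, Q a * Real.log (p a / Q a) ≤ 0 := by
    calc ∑ a, Q a * Real.log (p a / Q a) ≤ ∑ a, (p a - Q a) := Finset.sum_le_sum fun a _ => key a
      _ = 0 := by rw [Finset.sum_sub_distrib, hp1, hQ.2, sub_self]
  have h3 : ∀ a, Q a * Real.log (Q a / p a) = -(Q a * Real.log (p a / Q a)) := by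
    intro a
    rcases eq_or_lt_of_le (hQ.1 a) with h0 | hpos
    · simp [← h0]
    · rw [Real.log_div (ne_of_gt hpos) (ne_of_gt (hp a)),
        Real.log_div (ne_of_gt (hp a)) (ne_of_gt hpos)]; ring
  have h4 : ∑ a, Q a * Real.log (Q a / p a) = -∑ a, Q a * Real.log (p a / Q a) := by
    rw [← Finset.sum_neg_distrib]
    exact Finset.sum_congr rfl fun a _ => h3 a
  rw [h4]
  linarith

/-- The number of empirical distributions of length-`n` sequences is at most `(n+1)^|α|`. -/
lemma card_types_le :
    ((Finset.univ.image (emp : (Fin n → α) → (α → ℝ)))).card ≤ (n+1) ^ (Fintype.card α) := by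
  have hsub : (Finset.univ.image (emp : (Fin n → α) → (α → ℝ)))
      ⊆ Finset.univ.image (fun k : α → Fin (n+1) => fun a => ((k a : ℕ) : ℝ) / n) := by
    intro Q hQ
    rcases Finset.mem_image.mp hQ with ⟨z, _, rfl⟩
    refine Finset.mem_image.mpr
      ⟨fun a => ⟨(Finset.univ.filter fun t => z t = a).card, ?_⟩, Finset.mem_univ _, rfl⟩
    have := Finset.card_filter_le (Finset.univ : Finset (Fin n)) (fun t => z t = a)
    simpa using Nat.lt_succ_of_le (by simpa using this)
  calc _ ≤ _ := Finset.card_le_card hsub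
    _ ≤ (Finset.univ : Finset (α → Fin (n+1))).card := Finset.card_image_le
    _ = (n+1) ^ (Fintype.card α) := by simp [Finset.card_univ]

/-- Given counts summing to `n`, there is a sequence with those exact counts. -/
lemma exists_seq_of_counts (k : α → ℕ) (hk : ∑ a, k a = n) :
    ∃ z : Fin n → α, ∀ a, (Finset.univ.filter fun t => z t = a).card = k a := by
  have hcard : Fintype.card (Σ a : α, Fin (k a)) = Fintype.card (Fin n) := by
    simp [Fintype.card_sigma, hk]
  obtain ⟨e⟩ := Fintype.card_eq.mp hcard
  refine ⟨fun t => (e.symm t).1, fun a => ?_⟩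
  have h1 : (Finset.univ.filter fun t : Fin n => (e.symm t).1 = a).card
      = (Finset.univ.filter fun s : Σ a : α, Fin (k a) => s.1 = a).card := by
    refine Finset.card_bij (fun t _ => e.symm t) ?_ ?_ ?_
    · intro t ht; simpa using (Finset.mem_filter.mp ht).2
    · intro t1 _ t2 _ h; exact e.symm.injective h
    · intro s hs; exact ⟨e s, by simpa using (Finset.mem_filter.mp hs).2, by simp⟩
  rw [h1, Finset.card_filter]
  rw [← Finset.univ_sigma_univ, Finset.sum_sigma]
  simp [apply_ite Finset.card,
    Finset.sum_ite_eq' Finset.univ a fun x => (Finset.univ : Finset (Fin (k x))).card]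

/-- For `n` large enough there exists a `μ`-typical sequence. -/
lemma exists_typical (p : α → ℝ) (hp : IsPMF p) (μ : ℝ) (hμ : 0 < μ) (hn : 0 < n)
    (hbig : (Fintype.card α : ℝ) ≤ n * μ) :
    ∃ z : Fin n → α, Typ μ p z := by
  have hne : Nonempty α := by
    by_contra h
    rw [not_nonempty_iff] at h
    have := hp.2
    rw [Finset.univ_eq_empty, Finset.sum_empty] at this
    norm_num at this
  have hcard1 : (1:ℝ) ≤ Fintype.card α := by exact_mod_cast Fintype.card_pos
  have hnR : (0:ℝ) < n := by exact_mod_cast hn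
  have hinv : (Fintype.card α : ℝ) / n ≤ μ := by
    rw [div_le_iff₀ hnR]; linarith [hbig, mul_comm (n:ℝ) μ]
  obtain ⟨a₀⟩ := hne
  set s : ℕ := ∑ a ∈ Finset.univ.erase a₀, ⌊(n:ℝ) * p a⌋₊ with hs
  have hsle : (s:ℝ) ≤ n := by
    rw [hs]
    push_cast
    calc ∑ a ∈ Finset.univ.erase a₀, ((⌊(n:ℝ) * p a⌋₊ : ℝ))
        ≤ ∑ a ∈ Finset.univ.erase a₀, (n:ℝ) * p a :=
          Finset.sum_le_sum fun a _ => Nat.floor_le (mul_nonneg hnR.le (hp.1 a))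
      _ = (n:ℝ) * ∑ a ∈ Finset.univ.erase a₀, p a := by rw [Finset.mul_sum]
      _ ≤ (n:ℝ) * 1 := by
          refine mul_le_mul_of_nonneg_left ?_ hnR.le
          rw [← hp.2]
          exact Finset.sum_le_sum_of_subset_of_nonneg (Finset.subset_univ _)
            (fun a _ _ => hp.1 a)
      _ = n := mul_one _
  have hsn : s ≤ n := by exact_mod_cast hsle
  set k : α → ℕ := fun a => if a = a₀ then n - s else ⌊(n:ℝ) * p a⌋₊ with hkdef
  have hksum : ∑ a, k a = n := by
    rw [← Finset.add_sum_erase _ _ (Finset.mem_univ a₀)]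
    have : ∑ a ∈ Finset.univ.erase a₀, k a = s := by
      refine Finset.sum_congr rfl fun a ha => ?_
      simp [hkdef, (Finset.mem_erase.mp ha).1]
    rw [this]
    simp [hkdef, Nat.sub_add_cancel hsn]
  obtain ⟨z, hz⟩ := exists_seq_of_counts k hksum
  refine ⟨z, fun a => ?_⟩
  have hempz : emp z a = (k a : ℝ) / n := by unfold emp; rw [hz a]
  rw [hempz]
  have hfloor : ∀ a, |((⌊(n:ℝ) * p a⌋₊ : ℝ))/n - p a| ≤ 1/n := by
    intro a
    have h1 : ((⌊(n:ℝ) * p a⌋₊ : ℝ)) ≤ (n:ℝ) * p a := Nat.floor_le (mul_nonneg hnR.le (hp.1 a))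
    have h2 : (n:ℝ) * p a - 1 < ((⌊(n:ℝ) * p a⌋₊ : ℝ)) := by
      have := Nat.lt_floor_add_one ((n:ℝ) * p a)
      linarith
    have e : ((⌊(n:ℝ) * p a⌋₊ : ℝ))/n - p a = (((⌊(n:ℝ) * p a⌋₊ : ℝ)) - n * p a)/n := by
      field_simp
    rw [e, abs_div, abs_of_pos hnR]
    gcongr
    exact abs_le.mpr ⟨by linarith, by linarith⟩
  by_cases ha : a = a₀
  · subst ha
    have hka : (k a : ℝ) = (n:ℝ) - s := by
      simp only [hkdef, if_pos rfl]
      push_cast [Nat.cast_sub hsn]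
      ring
    have hsum_p : ∑ a' ∈ Finset.univ.erase a, p a' = 1 - p a := by
      have := Finset.add_sum_erase Finset.univ p (Finset.mem_univ a)
      rw [hp.2] at this; linarith
    have hdiff : (k a : ℝ)/n - p a
        = ∑ a' ∈ Finset.univ.erase a, (p a' - ((⌊(n:ℝ) * p a'⌋₊ : ℝ))/n) := by
      rw [hka, Finset.sum_sub_distrib, hsum_p, hs]
      push_cast
      field_simp
      rw [mul_sub, ← Finset.sum_div, mul_div_assoc', mul_div_cancel_left₀ _ (ne_of_gt hnR)]
      ring
    have hub : ∀ a' ∈ Finset.univ.erase a, p a' - ((⌊(n:ℝ) * p a'⌋₊ : ℝ))/n ≤ 1/n := by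
      intro a' _
      have := (abs_le.mp (hfloor a')).1
      linarith
    have hlb : ∀ a' ∈ Finset.univ.erase a, 0 ≤ p a' - ((⌊(n:ℝ) * p a'⌋₊ : ℝ))/n := by
      intro a' _
      have h1 : ((⌊(n:ℝ) * p a'⌋₊ : ℝ)) ≤ (n:ℝ) * p a' := Nat.floor_le (mul_nonneg hnR.le (hp.1 a'))
      rw [sub_nonneg, div_le_iff₀ hnR]
      linarith [mul_comm (n:ℝ) (p a')]
    rw [abs_le]
    constructor
    · rw [hdiff]
      have : (0:ℝ) ≤ ∑ a' ∈ Finset.univ.erase a, (p a' - ((⌊(n:ℝ) * p a'⌋₊ : ℝ))/n) :=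
        Finset.sum_nonneg hlb
      linarith
    · rw [hdiff]
      calc ∑ a' ∈ Finset.univ.erase a, (p a' - ((⌊(n:ℝ) * p a'⌋₊ : ℝ))/n)
          ≤ ∑ _a' ∈ Finset.univ.erase a, 1/(n:ℝ) := Finset.sum_le_sum hub
        _ = (Finset.univ.erase a).card * (1/(n:ℝ)) := by rw [Finset.sum_const, nsmul_eq_mul]
        _ ≤ (Fintype.card α) * (1/(n:ℝ)) := by
            refine mul_le_mul_of_nonneg_right ?_ (by positivity)
            exact_mod_cast Finset.card_le_card (Finset.subset_univ _)
        _ = (Fintype.card α : ℝ)/n := by ring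
        _ ≤ μ := hinv
  · have hka : (k a : ℝ) = ((⌊(n:ℝ) * p a⌋₊ : ℝ)) := by simp [hkdef, ha]
    rw [hka]
    calc |((⌊(n:ℝ) * p a⌋₊ : ℝ))/n - p a| ≤ 1/n := hfloor a
      _ ≤ (Fintype.card α : ℝ)/n := by gcongr
      _ ≤ μ := hinv

end AuxSeq

section AuxModel

set_option linter.unusedSectionVars false

variable {𝒳 𝒴₁ : Type*} [Fintype 𝒳] [Fintype 𝒴₁] {n : ℕ}

lemma mX_emp (z : Fin n → 𝒳 × 𝒴₁) : mX (emp z) = emp (fun t => (z t).1) := by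
  funext x0
  unfold mX emp
  rw [← Finset.sum_div]
  congr 1
  rw [← Nat.cast_sum]
  congr 1
  rw [Finset.card_eq_sum_card_fiberwise
    (f := fun t => (z t).2) (t := Finset.univ) (fun t _ => Finset.mem_univ _)]
  refine Finset.sum_congr rfl fun y _ => ?_
  congr 1
  ext t
  simp [Prod.ext_iff, and_comm]

lemma mY1_emp (z : Fin n → 𝒳 × 𝒴₁) : mY1 (emp z) = emp (fun t => (z t).2) := by
  funext y0
  unfold mY1 emp
  rw [← Finset.sum_div]
  congr 1
  rw [← Nat.cast_sum]
  congr 1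
  rw [Finset.card_eq_sum_card_fiberwise
    (f := fun t => (z t).1) (t := Finset.univ) (fun t _ => Finset.mem_univ _)]
  refine Finset.sum_congr rfl fun x _ => ?_
  congr 1
  ext t
  simp [Prod.ext_iff, and_comm]

lemma mX_pmf (p : 𝒳 × 𝒴₁ → ℝ) (hp : IsPMF p) : IsPMF (mX p) := by
  constructor
  · intro x; exact Finset.sum_nonneg fun y _ => hp.1 _
  · rw [← hp.2, Fintype.sum_prod_type]; rfl

lemma mY1_pmf (p : 𝒳 × 𝒴₁ → ℝ) (hp : IsPMF p) : IsPMF (mY1 p) := by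
  constructor
  · intro y; exact Finset.sum_nonneg fun x _ => hp.1 _
  · rw [← hp.2, Fintype.sum_prod_type]
    exact Finset.sum_comm

lemma beta1_le_main {Mh : ℕ} (P : Fin Mh → 𝒳 × 𝒴₁ → ℝ) (h1 : Fin Mh)
    (hP : ∀ m, IsPMF (P m)) (hpos : ∀ a, 0 < P h1 a) (hn : 0 < n) (μ μ' : ℝ) :
    β1 P h1 n μ μ' ≤ ∑ m ∈ Finset.univ.filter (fun m : Fin Mh => m ≠ h1),
      ((n+1 : ℝ)) ^ (Fintype.card (𝒳 × 𝒴₁)) *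
        Real.exp (-(n:ℝ) * sInf {d : ℝ | ∃ Q : 𝒳 × 𝒴₁ → ℝ, IsPMF Q
          ∧ (∀ a, |mX Q a - mX (P m) a| ≤ μ)
          ∧ (∀ b, |mY1 Q b - mY1 (P m) b| ≤ μ')
          ∧ d = klD Q (P h1)}) := by
  set K := Fintype.card (𝒳 × 𝒴₁)
  set S : Fin Mh → ℝ := fun m => sInf {d : ℝ | ∃ Q : 𝒳 × 𝒴₁ → ℝ, IsPMF Q
          ∧ (∀ a, |mX Q a - mX (P m) a| ≤ μ)
          ∧ (∀ b, |mY1 Q b - mY1 (P m) b| ≤ μ')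
          ∧ d = klD Q (P h1)} with hS
  have step1 : β1 P h1 n μ μ' = ∑ z : Fin n → 𝒳 × 𝒴₁,
      if ∃ m, m ≠ h1 ∧ Typ μ (mX (P m)) (fun t => (z t).1) ∧ Typ μ' (mY1 (P m)) (fun t => (z t).2)
        then ∏ t, P h1 (z t) else 0 := by
    unfold β1
    symm
    rw [← Equiv.sum_comp (Equiv.arrowProdEquivProdArrow (Fin n) (fun _ => 𝒳) (fun _ => 𝒴₁)).symm, Fintype.sum_prod_type]
    rfl
  rw [step1]
  have step2 : ∑ z : Fin n → 𝒳 × 𝒴₁,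
      (if ∃ m, m ≠ h1 ∧ Typ μ (mX (P m)) (fun t => (z t).1) ∧ Typ μ' (mY1 (P m)) (fun t => (z t).2)
        then ∏ t, P h1 (z t) else 0)
      ≤ ∑ m ∈ Finset.univ.filter (fun m : Fin Mh => m ≠ h1), ∑ z : Fin n → 𝒳 × 𝒴₁,
      (if Typ μ (mX (P m)) (fun t => (z t).1) ∧ Typ μ' (mY1 (P m)) (fun t => (z t).2)
        then ∏ t, P h1 (z t) else 0) := by
    rw [Finset.sum_comm]
    refine Finset.sum_le_sum fun z _ => ?_
    have hAnn : (0:ℝ) ≤ ∏ t, P h1 (z t) := Finset.prod_nonneg fun t _ => (hpos _).le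
    by_cases hex : ∃ m, m ≠ h1 ∧ Typ μ (mX (P m)) (fun t => (z t).1)
        ∧ Typ μ' (mY1 (P m)) (fun t => (z t).2)
    · rw [if_pos hex]
      obtain ⟨m₀, hm₀, hc⟩ := hex
      calc ∏ t, P h1 (z t)
          = (if Typ μ (mX (P m₀)) (fun t => (z t).1) ∧ Typ μ' (mY1 (P m₀)) (fun t => (z t).2)
              then ∏ t, P h1 (z t) else 0) := by rw [if_pos hc]
        _ ≤ _ := Finset.single_le_sum (f := fun m => if Typ μ (mX (P m)) (fun t => (z t).1)
              ∧ Typ μ' (mY1 (P m)) (fun t => (z t).2) then ∏ t, P h1 (z t) else 0)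
            (fun m _ => by positivity) (Finset.mem_filter.mpr ⟨Finset.mem_univ _, hm₀⟩)
    · rw [if_neg hex]
      exact Finset.sum_nonneg fun m _ => by positivity
  refine step2.trans (Finset.sum_le_sum fun m hm => ?_)
  have step3 : ∑ z : Fin n → 𝒳 × 𝒴₁,
      (if Typ μ (mX (P m)) (fun t => (z t).1) ∧ Typ μ' (mY1 (P m)) (fun t => (z t).2)
        then ∏ t, P h1 (z t) else 0)
      = ∑ Q ∈ Finset.univ.image (emp : (Fin n → 𝒳 × 𝒴₁) → _),
          ∑ z ∈ Finset.univ.filter (fun z : Fin n → 𝒳 × 𝒴₁ => emp z = Q),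
      (if Typ μ (mX (P m)) (fun t => (z t).1) ∧ Typ μ' (mY1 (P m)) (fun t => (z t).2)
        then ∏ t, P h1 (z t) else 0) := by
    rw [Finset.sum_fiberwise_of_maps_to (fun z _ => Finset.mem_image_of_mem _ (Finset.mem_univ z))]
  rw [step3]
  have inner_le : ∀ Q ∈ Finset.univ.image (emp : (Fin n → 𝒳 × 𝒴₁) → _),
      ∑ z ∈ Finset.univ.filter (fun z : Fin n → 𝒳 × 𝒴₁ => emp z = Q),
      (if Typ μ (mX (P m)) (fun t => (z t).1) ∧ Typ μ' (mY1 (P m)) (fun t => (z t).2)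
        then ∏ t, P h1 (z t) else 0) ≤ Real.exp (-(n:ℝ) * S m) := by
    intro Q _
    rw [← Finset.sum_filter]
    set s := (Finset.univ.filter (fun z : Fin n → 𝒳 × 𝒴₁ => emp z = Q)).filter
      (fun z => Typ μ (mX (P m)) (fun t => (z t).1) ∧ Typ μ' (mY1 (P m)) (fun t => (z t).2)) with hs
    rcases s.eq_empty_or_nonempty with he | ⟨z₀, hz₀⟩
    · rw [he, Finset.sum_empty]; positivity
    · have hz₀' := Finset.mem_filter.mp hz₀
      have hQz : emp z₀ = Q := (Finset.mem_filter.mp hz₀'.1).2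
      have hcond := hz₀'.2
      have hQpmf : IsPMF Q := ⟨fun a => hQz ▸ emp_nonneg z₀ a, hQz ▸ sum_emp hn z₀⟩
      have hfeas : klD Q (P h1) ∈ {d : ℝ | ∃ Q' : 𝒳 × 𝒴₁ → ℝ, IsPMF Q'
          ∧ (∀ a, |mX Q' a - mX (P m) a| ≤ μ)
          ∧ (∀ b, |mY1 Q' b - mY1 (P m) b| ≤ μ')
          ∧ d = klD Q' (P h1)} := by
        refine ⟨Q, hQpmf, fun a => ?_, fun b => ?_, rfl⟩
        · rw [← hQz, mX_emp]; exact hcond.1 a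
        · rw [← hQz, mY1_emp]; exact hcond.2 b
      have hbdd : BddBelow {d : ℝ | ∃ Q' : 𝒳 × 𝒴₁ → ℝ, IsPMF Q'
          ∧ (∀ a, |mX Q' a - mX (P m) a| ≤ μ)
          ∧ (∀ b, |mY1 Q' b - mY1 (P m) b| ≤ μ')
          ∧ d = klD Q' (P h1)} := by
        refine ⟨0, fun d hd => ?_⟩
        obtain ⟨Q', hQ', _, _, rfl⟩ := hd
        exact klD_nonneg Q' (P h1) hQ' hpos (hP h1).2
      have hSle : S m ≤ klD Q (P h1) := csInf_le hbdd hfeas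
      calc ∑ z ∈ s, ∏ t, P h1 (z t)
          ≤ Real.exp (-(n:ℝ) * klD Q (P h1)) :=
            fiber_sum_le hn (P h1) hpos s Q
              (fun z hz => (Finset.mem_filter.mp (Finset.mem_filter.mp hz).1).2)
        _ ≤ Real.exp (-(n:ℝ) * S m) := by
            apply Real.exp_le_exp.mpr
            have : (0:ℝ) ≤ n := Nat.cast_nonneg n
            nlinarith
  calc ∑ Q ∈ Finset.univ.image (emp : (Fin n → 𝒳 × 𝒴₁) → _), ∑ z ∈ _, _
      ≤ ∑ _Q ∈ Finset.univ.image (emp : (Fin n → 𝒳 × 𝒴₁) → _), Real.exp (-(n:ℝ) * S m) :=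
        Finset.sum_le_sum inner_le
    _ = ((Finset.univ.image (emp : (Fin n → 𝒳 × 𝒴₁) → _)).card : ℝ) * Real.exp (-(n:ℝ) * S m) := by
        rw [Finset.sum_const, nsmul_eq_mul]
    _ ≤ ((n+1:ℝ)) ^ K * Real.exp (-(n:ℝ) * S m) := by
        refine mul_le_mul_of_nonneg_right ?_ (Real.exp_pos _).le
        calc ((Finset.univ.image (emp : (Fin n → 𝒳 × 𝒴₁) → _)).card : ℝ)
            ≤ ((n+1) ^ K : ℕ) := by exact_mod_cast card_types_le
          _ = ((n+1:ℝ)) ^ K := by push_cast; ring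

lemma klD_continuous (p1 : 𝒳 × 𝒴₁ → ℝ) (hp1 : ∀ a, 0 < p1 a) :
    Continuous (fun Q : 𝒳 × 𝒴₁ → ℝ => klD Q p1) := by
  have hrw : (fun Q : 𝒳 × 𝒴₁ → ℝ => klD Q p1)
      = fun Q => ∑ a, (Q a * Real.log (Q a) - Q a * Real.log (p1 a)) := by
    funext Q
    unfold klD
    refine Finset.sum_congr rfl fun a _ => ?_
    rcases eq_or_ne (Q a) 0 with h | h
    · simp [h]
    · rw [Real.log_div h (ne_of_gt (hp1 a))]; ring
  rw [hrw]
  refine continuous_finset_sum _ fun a _ => Continuous.sub ?_ ?_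
  · exact Real.continuous_mul_log.comp (continuous_apply a)
  · exact (continuous_apply a).mul continuous_const

lemma continuous_mX (a : 𝒳) : Continuous (fun Q : 𝒳 × 𝒴₁ → ℝ => mX Q a) := by
  unfold mX; exact continuous_finset_sum _ fun y _ => continuous_apply _

lemma continuous_mY1 (b : 𝒴₁) : Continuous (fun Q : 𝒳 × 𝒴₁ → ℝ => mY1 Q b) := by
  unfold mY1; exact continuous_finset_sum _ fun x _ => continuous_apply _

/-- Continuity of the constrained infimum at zero slack. -/
lemma sInf_relax_ge (p1 pm : 𝒳 × 𝒴₁ → ℝ) (hp1 : ∀ a, 0 < p1 a) (hp1s : ∑ a, p1 a = 1)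
    (hpm : IsPMF pm) (ε : ℝ) (hε : 0 < ε) :
    ∃ δ₀ > (0:ℝ), ∀ δ δ' : ℝ, 0 < δ → 0 < δ' → δ ≤ δ₀ → δ' ≤ δ₀ →
      sInf {e : ℝ | ∃ Q : 𝒳 × 𝒴₁ → ℝ, IsPMF Q ∧ (∀ a, mX Q a = mX pm a)
          ∧ (∀ b, mY1 Q b = mY1 pm b) ∧ e = klD Q p1} - ε
        ≤ sInf {d : ℝ | ∃ Q : 𝒳 × 𝒴₁ → ℝ, IsPMF Q ∧ (∀ a, |mX Q a - mX pm a| ≤ δ)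
          ∧ (∀ b, |mY1 Q b - mY1 pm b| ≤ δ') ∧ d = klD Q p1} := by
  set f : (𝒳 × 𝒴₁ → ℝ) → ℝ := fun Q => klD Q p1 with hf
  set S0 : ℝ := sInf {e : ℝ | ∃ Q : 𝒳 × 𝒴₁ → ℝ, IsPMF Q ∧ (∀ a, mX Q a = mX pm a)
          ∧ (∀ b, mY1 Q b = mY1 pm b) ∧ e = klD Q p1} with hS0
  by_contra hcon
  push_neg at hcon
  have bad : ∀ k : ℕ, ∃ Q : 𝒳 × 𝒴₁ → ℝ, IsPMF Q
      ∧ (∀ a, |mX Q a - mX pm a| ≤ 1/(k+1:ℝ)) ∧ (∀ b, |mY1 Q b - mY1 pm b| ≤ 1/(k+1:ℝ))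
      ∧ f Q ≤ S0 - ε := by
    intro k
    have hk : (0:ℝ) < 1/(k+1:ℝ) := by positivity
    obtain ⟨δ, δ', hδ, hδ', hδle, hδ'le, hlt⟩ := hcon (1/(k+1:ℝ)) hk
    have hne : {d : ℝ | ∃ Q : 𝒳 × 𝒴₁ → ℝ, IsPMF Q ∧ (∀ a, |mX Q a - mX pm a| ≤ δ)
        ∧ (∀ b, |mY1 Q b - mY1 pm b| ≤ δ') ∧ d = klD Q p1}.Nonempty := by
      exact ⟨klD pm p1, pm, hpm, fun a => by simp [hδ.le], fun b => by simp [hδ'.le], rfl⟩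
    obtain ⟨d, ⟨Q, hQ, hQX, hQY, rfl⟩, hdlt⟩ := exists_lt_of_csInf_lt hne hlt
    exact ⟨Q, hQ, fun a => (hQX a).trans hδle, fun b => (hQY b).trans hδ'le, hdlt.le⟩
  set K : ℕ → Set (𝒳 × 𝒴₁ → ℝ) := fun k => {Q | IsPMF Q
      ∧ (∀ a, |mX Q a - mX pm a| ≤ 1/(k+1:ℝ)) ∧ (∀ b, |mY1 Q b - mY1 pm b| ≤ 1/(k+1:ℝ))
      ∧ f Q ≤ S0 - ε} with hK
  have hclosed : ∀ k, IsClosed (K k) := by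
    intro k
    have h1 : IsClosed {Q : 𝒳 × 𝒴₁ → ℝ | IsPMF Q} := by
      have : {Q : 𝒳 × 𝒴₁ → ℝ | IsPMF Q}
          = (⋂ a, {Q : 𝒳 × 𝒴₁ → ℝ | 0 ≤ Q a}) ∩ {Q | ∑ a, Q a = 1} := by
        ext Q; simp [IsPMF, Set.mem_iInter, forall_and]
      rw [this]
      refine IsClosed.inter (isClosed_iInter fun a => ?_) ?_
      · exact isClosed_le continuous_const (continuous_apply a)
      · exact isClosed_eq (continuous_finset_sum _ fun a _ => continuous_apply a) continuous_const
    have h2 : IsClosed {Q : 𝒳 × 𝒴₁ → ℝ | ∀ a, |mX Q a - mX pm a| ≤ 1/(k+1:ℝ)} := by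
      rw [Set.setOf_forall]
      refine isClosed_iInter fun a => isClosed_le ?_ continuous_const
      exact ((continuous_mX a).sub continuous_const).abs
    have h3 : IsClosed {Q : 𝒳 × 𝒴₁ → ℝ | ∀ b, |mY1 Q b - mY1 pm b| ≤ 1/(k+1:ℝ)} := by
      rw [Set.setOf_forall]
      refine isClosed_iInter fun b => isClosed_le ?_ continuous_const
      exact ((continuous_mY1 b).sub continuous_const).abs
    have h4 : IsClosed {Q : 𝒳 × 𝒴₁ → ℝ | f Q ≤ S0 - ε} :=
      isClosed_le (klD_continuous p1 hp1) continuous_const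
    have : K k = {Q : 𝒳 × 𝒴₁ → ℝ | IsPMF Q}
        ∩ ({Q | ∀ a, |mX Q a - mX pm a| ≤ 1/(k+1:ℝ)}
        ∩ ({Q | ∀ b, |mY1 Q b - mY1 pm b| ≤ 1/(k+1:ℝ)} ∩ {Q | f Q ≤ S0 - ε})) := by
      ext Q; simp [hK, Set.mem_setOf_eq, and_assoc]
    rw [this]
    exact h1.inter (h2.inter (h3.inter h4))
  have hcompact : IsCompact (K 0) := by
    refine IsCompact.of_isClosed_subset
      (isCompact_univ_pi fun _ => (isCompact_Icc : IsCompact (Set.Icc (0:ℝ) 1)))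
      (hclosed 0) ?_
    intro Q hQ
    have hpmf : IsPMF Q := hQ.1
    intro a _
    refine ⟨hpmf.1 a, ?_⟩
    calc Q a ≤ ∑ a', Q a' := Finset.single_le_sum (fun a' _ => hpmf.1 a') (Finset.mem_univ a)
      _ = 1 := hpmf.2
  have hsub : ∀ k, K (k+1) ⊆ K k := by
    intro k Q hQ
    obtain ⟨h1, h2, h3, h4⟩ := hQ
    have hmono : 1/((k:ℝ)+1+1) ≤ 1/((k:ℝ)+1) := by
      apply one_div_le_one_div_of_le <;> linarith
    exact ⟨h1, fun a => (h2 a).trans (by push_cast; linarith [hmono]),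
      fun b => (h3 b).trans (by push_cast; linarith [hmono]), h4⟩
  have hnon : ∀ k, (K k).Nonempty := by
    intro k
    obtain ⟨Q, hQ, h2, h3, h4⟩ := bad k
    exact ⟨Q, hQ, h2, h3, h4⟩
  obtain ⟨Q, hQ⟩ := IsCompact.nonempty_iInter_of_sequence_nonempty_isCompact_isClosed
    K hsub hnon hcompact hclosed
  have hQk : ∀ k : ℕ, Q ∈ K k := Set.mem_iInter.mp hQ
  have hXeq : ∀ a, mX Q a = mX pm a := by
    intro a
    have hk : ∀ k : ℕ, |mX Q a - mX pm a| ≤ 1/(k+1:ℝ) := fun k => (hQk k).2.1 a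
    have hle : |mX Q a - mX pm a| ≤ 0 :=
      ge_of_tendsto' tendsto_one_div_add_atTop_nhds_zero_nat (fun k => (hk k))
    have h0 : |mX Q a - mX pm a| = 0 := le_antisymm hle (abs_nonneg _)
    exact sub_eq_zero.mp (abs_eq_zero.mp h0)
  have hYeq : ∀ b, mY1 Q b = mY1 pm b := by
    intro b
    have hk : ∀ k : ℕ, |mY1 Q b - mY1 pm b| ≤ 1/(k+1:ℝ) := fun k => (hQk k).2.2.1 b
    have hle : |mY1 Q b - mY1 pm b| ≤ 0 :=
      ge_of_tendsto' tendsto_one_div_add_atTop_nhds_zero_nat (fun k => (hk k))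
    have h0 : |mY1 Q b - mY1 pm b| = 0 := le_antisymm hle (abs_nonneg _)
    exact sub_eq_zero.mp (abs_eq_zero.mp h0)
  have hmem : f Q ∈ {e : ℝ | ∃ Q' : 𝒳 × 𝒴₁ → ℝ, IsPMF Q' ∧ (∀ a, mX Q' a = mX pm a)
      ∧ (∀ b, mY1 Q' b = mY1 pm b) ∧ e = klD Q' p1} := ⟨Q, (hQk 0).1, hXeq, hYeq, rfl⟩
  have hbdd : BddBelow {e : ℝ | ∃ Q' : 𝒳 × 𝒴₁ → ℝ, IsPMF Q' ∧ (∀ a, mX Q' a = mX pm a)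
      ∧ (∀ b, mY1 Q' b = mY1 pm b) ∧ e = klD Q' p1} := by
    refine ⟨0, fun e he => ?_⟩
    obtain ⟨Q', hQ', _, _, rfl⟩ := he
    exact klD_nonneg Q' p1 hQ' hp1 hp1s
  have hS0le : S0 ≤ f Q := csInf_le hbdd hmem
  have := (hQk 0).2.2.2
  linarith

end AuxModel

lemma o_tendsto (K : ℕ) :
    Filter.Tendsto (fun n : ℕ => (K:ℝ) * Real.log ((n:ℝ)+1) / n) Filter.atTop (nhds 0) := by
  have hA : Filter.Tendsto (fun x : ℝ => Real.log x / x) Filter.atTop (nhds 0) :=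
    Real.isLittleO_log_id_atTop.tendsto_div_nhds_zero
  have hcast : Filter.Tendsto (fun n : ℕ => (n:ℝ)+1) Filter.atTop Filter.atTop :=
    Filter.tendsto_atTop_add_const_right _ 1 tendsto_natCast_atTop_atTop
  have hA' : Filter.Tendsto (fun n : ℕ => Real.log ((n:ℝ)+1) / ((n:ℝ)+1))
      Filter.atTop (nhds 0) := hA.comp hcast
  have hB : Filter.Tendsto (fun n : ℕ => ((n:ℝ)+1)/n) Filter.atTop (nhds 1) := by
    have h1 : Filter.Tendsto (fun n : ℕ => 1 + 1/(n:ℝ)) Filter.atTop (nhds (1+0)) :=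
      tendsto_const_nhds.add (by
        simpa [one_div] using (tendsto_one_div_atTop_nhds_zero_nat :
          Filter.Tendsto (fun n : ℕ => 1 / (n:ℝ)) Filter.atTop (nhds 0)))
    rw [add_zero] at h1
    refine h1.congr' ?_
    filter_upwards [Filter.eventually_ge_atTop 1] with n hn
    have : (n:ℝ) ≠ 0 := by positivity
    field_simp
  have hprod : Filter.Tendsto
      (fun n : ℕ => (K:ℝ) * (Real.log ((n:ℝ)+1) / ((n:ℝ)+1)) * (((n:ℝ)+1)/n))
      Filter.atTop (nhds ((K:ℝ) * 0 * 1)) :=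
    (tendsto_const_nhds.mul hA').mul hB
  rw [show (K:ℝ) * 0 * 1 = 0 by ring] at hprod
  refine hprod.congr' ?_
  filter_upwards [Filter.eventually_ge_atTop 1] with n hn
  have h0 : (n:ℝ) ≠ 0 := by positivity
  have h1 : (n:ℝ)+1 ≠ 0 := by positivity
  field_simp

/-- Zero-rate concurrent detection achievability. With the
typicality scheme, `β₁ ≤ ∑_{m≠1} exp[-n(min{D(Q‖P^{(1)}_{XY₁}) :
|Q_X - P_X^{(m)}| ≤ μ, |Q_{Y₁} - P_{Y₁}^{(m)}| ≤ μ'} - o(1))]`, and in the limit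
`μ, μ' → 0` the exponent is
`min_{m≠1} min{D(Q‖P^{(1)}_{XY₁}) : Q_X = P_X^{(m)}, Q_{Y₁} = P_{Y₁}^{(m)}}`. -/
theorem stmt_19 {𝒳 𝒴₁ : Type*} [Fintype 𝒳] [Fintype 𝒴₁]
    (Mh : ℕ) (hMh : 2 ≤ Mh) (h1 : Fin Mh)
    (P : Fin Mh → 𝒳 × 𝒴₁ → ℝ) (hP : ∀ m, IsPMF (P m)) (hpos : ∀ a, 0 < P h1 a) :
    (∀ μ μ' : ℝ, 0 < μ → μ < μ' →
      ∃ o : ℕ → ℝ, Filter.Tendsto o Filter.atTop (nhds 0) ∧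
        ∀ n : ℕ, 0 < n →
          β1 P h1 n μ μ' ≤ ∑ m ∈ Finset.univ.filter (fun m : Fin Mh => m ≠ h1),
            Real.exp (-(n : ℝ) *
              (sInf {d : ℝ | ∃ Q : 𝒳 × 𝒴₁ → ℝ, IsPMF Q
                  ∧ (∀ a, |mX Q a - mX (P m) a| ≤ μ)
                  ∧ (∀ b, |mY1 Q b - mY1 (P m) b| ≤ μ')
                  ∧ d = klD Q (P h1)} - o n)))
      ∧ ∀ η > (0:ℝ), ∃ μ₀ > (0:ℝ), ∀ μ μ' : ℝ, 0 < μ → μ < μ' → μ' < μ₀ →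
          sInf {d : ℝ | ∃ m : Fin Mh, m ≠ h1 ∧
              d = sInf {e : ℝ | ∃ Q : 𝒳 × 𝒴₁ → ℝ, IsPMF Q
                  ∧ (∀ a, mX Q a = mX (P m) a)
                  ∧ (∀ b, mY1 Q b = mY1 (P m) b)
                  ∧ e = klD Q (P h1)}} - η
            ≤ Filter.liminf (fun n : ℕ => -(1 / (n : ℝ)) * Real.log (β1 P h1 n μ μ'))
                Filter.atTop := by
  classical
  set K := Fintype.card (𝒳 × 𝒴₁) with hK
  constructor
  · -- Part 1
    intro μ μ' hμ hμμ'
    refine ⟨fun n => (K:ℝ) * Real.log ((n:ℝ)+1) / n, o_tendsto K, fun n hn => ?_⟩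
    refine (beta1_le_main P h1 hP hpos hn μ μ').trans (le_of_eq ?_)
    refine Finset.sum_congr rfl fun m _ => ?_
    have hnne : (n:ℝ) ≠ 0 := by positivity
    have hpos1 : (0:ℝ) < (n:ℝ)+1 := by positivity
    set S := sInf {d : ℝ | ∃ Q : 𝒳 × 𝒴₁ → ℝ, IsPMF Q
        ∧ (∀ a, |mX Q a - mX (P m) a| ≤ μ)
        ∧ (∀ b, |mY1 Q b - mY1 (P m) b| ≤ μ')
        ∧ d = klD Q (P h1)} with hSdef
    have e1 : -(n:ℝ) * (S - (K:ℝ) * Real.log ((n:ℝ)+1) / n)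
        = (K:ℝ) * Real.log ((n:ℝ)+1) + (-(n:ℝ) * S) := by
      field_simp
      ring
    rw [e1, Real.exp_add, Real.exp_nat_mul, Real.exp_log hpos1]
  · -- Part 2
    intro η hη
    -- basic objects
    have hM : 1 < Fintype.card (Fin Mh) := by rw [Fintype.card_fin]; omega
    obtain ⟨m₀, hm₀⟩ := Fintype.exists_ne_of_one_lt_card hM h1
    have hne : Nonempty (𝒳 × 𝒴₁) := by
      by_contra h
      rw [not_nonempty_iff] at h
      have := (hP h1).2
      rw [Finset.univ_eq_empty, Finset.sum_empty] at this
      norm_num at this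
    set F := Finset.univ.filter (fun m : Fin Mh => m ≠ h1) with hF
    have hFne : F.Nonempty := ⟨m₀, Finset.mem_filter.mpr ⟨Finset.mem_univ _, hm₀⟩⟩
    set S0 : Fin Mh → ℝ := fun m => sInf {e : ℝ | ∃ Q : 𝒳 × 𝒴₁ → ℝ, IsPMF Q
        ∧ (∀ a, mX Q a = mX (P m) a) ∧ (∀ b, mY1 Q b = mY1 (P m) b)
        ∧ e = klD Q (P h1)} with hS0
    set θ : ℝ := sInf {d : ℝ | ∃ m : Fin Mh, m ≠ h1 ∧ d = S0 m} with hθ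
    have hS0nn : ∀ m, 0 ≤ S0 m := by
      intro m
      refine le_csInf ⟨klD (P m) (P h1), P m, hP m, fun a => rfl, fun b => rfl, rfl⟩ ?_
      rintro e ⟨Q, hQ, _, _, rfl⟩
      exact klD_nonneg Q (P h1) hQ hpos (hP h1).2
    have hθle : ∀ m, m ≠ h1 → θ ≤ S0 m := by
      intro m hm
      refine csInf_le ⟨0, ?_⟩ ⟨m, hm, rfl⟩
      rintro d ⟨m', _, rfl⟩
      exact hS0nn m'
    -- per-hypothesis continuity radius
    have hrel : ∀ m : Fin Mh, ∃ δ₀ > (0:ℝ), ∀ δ δ' : ℝ, 0 < δ → 0 < δ' → δ ≤ δ₀ → δ' ≤ δ₀ →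
        S0 m - η/2 ≤ sInf {d : ℝ | ∃ Q : 𝒳 × 𝒴₁ → ℝ, IsPMF Q
          ∧ (∀ a, |mX Q a - mX (P m) a| ≤ δ) ∧ (∀ b, |mY1 Q b - mY1 (P m) b| ≤ δ')
          ∧ d = klD Q (P h1)} :=
      fun m => sInf_relax_ge (P h1) (P m) hpos (hP h1).2 (hP m) (η/2) (by linarith)
    choose δ₀ hδ₀pos hδ₀spec using hrel
    have hFinNe : Nonempty (Fin Mh) := ⟨h1⟩
    set μ₀ : ℝ := Finset.univ.inf' Finset.univ_nonempty δ₀ with hμ₀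
    have hμ₀pos : 0 < μ₀ := by
      rw [hμ₀, Finset.lt_inf'_iff]
      exact fun m _ => hδ₀pos m
    refine ⟨μ₀, hμ₀pos, ?_⟩
    intro μ μ' hμ hμμ' hμ'μ₀
    have hμ'pos : 0 < μ' := hμ.trans hμμ'
    -- lower bound on relaxed exponents
    have hSr : ∀ m ∈ F, θ - η/2 ≤ sInf {d : ℝ | ∃ Q : 𝒳 × 𝒴₁ → ℝ, IsPMF Q
        ∧ (∀ a, |mX Q a - mX (P m) a| ≤ μ) ∧ (∀ b, |mY1 Q b - mY1 (P m) b| ≤ μ')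
        ∧ d = klD Q (P h1)} := by
      intro m hm
      have hmδ : μ₀ ≤ δ₀ m := Finset.inf'_le _ (Finset.mem_univ m)
      have h1' : μ ≤ δ₀ m := le_of_lt (lt_of_lt_of_le (hμμ'.trans hμ'μ₀) hmδ)
      have h2' : μ' ≤ δ₀ m := le_of_lt (lt_of_lt_of_le hμ'μ₀ hmδ)
      have := hδ₀spec m μ μ' hμ hμ'pos h1' h2'
      have hθm := hθle m (Finset.mem_filter.mp hm).2
      linarith
    -- minimal probability
    set pmin : ℝ := Finset.univ.inf' Finset.univ_nonempty (P h1) with hpmin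
    have hpminpos : 0 < pmin := by
      rw [hpmin, Finset.lt_inf'_iff]
      exact fun a _ => hpos a
    -- eventual positivity and lower bound of β1
    have hevX : ∀ᶠ n : ℕ in Filter.atTop, (Fintype.card 𝒳 : ℝ) ≤ n * μ := by
      have : Filter.Tendsto (fun n : ℕ => (n:ℝ) * μ) Filter.atTop Filter.atTop :=
        Filter.Tendsto.atTop_mul_const hμ tendsto_natCast_atTop_atTop
      exact this.eventually_ge_atTop _
    have hevY : ∀ᶠ n : ℕ in Filter.atTop, (Fintype.card 𝒴₁ : ℝ) ≤ n * μ' := by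
      have : Filter.Tendsto (fun n : ℕ => (n:ℝ) * μ') Filter.atTop Filter.atTop :=
        Filter.Tendsto.atTop_mul_const hμ'pos tendsto_natCast_atTop_atTop
      exact this.eventually_ge_atTop _
    have hβlow : ∀ᶠ n : ℕ in Filter.atTop, pmin ^ n ≤ β1 P h1 n μ μ' := by
      filter_upwards [hevX, hevY, Filter.eventually_gt_atTop 0] with n hnX hnY hn
      obtain ⟨xs, hx⟩ := exists_typical (mX (P m₀)) (mX_pmf _ (hP m₀)) μ hμ hn hnX
      obtain ⟨ys, hy⟩ := exists_typical (mY1 (P m₀)) (mY1_pmf _ (hP m₀)) μ' hμ'pos hn hnY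
      have hterm : pmin ^ n ≤ ∏ t, P h1 (xs t, ys t) := by
        calc pmin ^ n = ∏ _t : Fin n, pmin := by rw [Finset.prod_const, Finset.card_fin]
          _ ≤ ∏ t, P h1 (xs t, ys t) :=
            Finset.prod_le_prod (fun t _ => hpminpos.le)
              (fun t _ => Finset.inf'_le _ (Finset.mem_univ _))
      refine hterm.trans ?_
      unfold β1
      have hcond : ∃ m, m ≠ h1 ∧ Typ μ (mX (P m)) xs ∧ Typ μ' (mY1 (P m)) ys :=
        ⟨m₀, hm₀, hx, hy⟩
      calc ∏ t, P h1 (xs t, ys t)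
          = (if ∃ m, m ≠ h1 ∧ Typ μ (mX (P m)) xs ∧ Typ μ' (mY1 (P m)) ys
              then ∏ t, P h1 (xs t, ys t) else 0) := by rw [if_pos hcond]
        _ ≤ ∑ y1 : Fin n → 𝒴₁, (if ∃ m, m ≠ h1 ∧ Typ μ (mX (P m)) xs ∧ Typ μ' (mY1 (P m)) y1
              then ∏ t, P h1 (xs t, y1 t) else 0) := by
            refine Finset.single_le_sum (f := fun y1 : Fin n → 𝒴₁ =>
                if ∃ m, m ≠ h1 ∧ Typ μ (mX (P m)) xs ∧ Typ μ' (mY1 (P m)) y1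
                  then ∏ t, P h1 (xs t, y1 t) else 0)
              (fun y _ => ?_) (Finset.mem_univ ys)
            split
            · exact Finset.prod_nonneg fun t _ => (hpos _).le
            · exact le_refl 0
        _ ≤ _ := by
            refine Finset.single_le_sum (f := fun x : Fin n → 𝒳 => ∑ y1 : Fin n → 𝒴₁,
                if ∃ m, m ≠ h1 ∧ Typ μ (mX (P m)) x ∧ Typ μ' (mY1 (P m)) y1
                  then ∏ t, P h1 (x t, y1 t) else 0)
              (fun x _ => Finset.sum_nonneg fun y _ => ?_) (Finset.mem_univ xs)
            split
            · exact Finset.prod_nonneg fun t _ => (hpos _).le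
            · exact le_refl 0
    -- eventual upper bound on the normalized log (coboundedness)
    have hub : ∀ᶠ n : ℕ in Filter.atTop,
        -(1/(n:ℝ)) * Real.log (β1 P h1 n μ μ') ≤ -Real.log pmin := by
      filter_upwards [hβlow, Filter.eventually_gt_atTop 0] with n hlow hn
      have hnR : (0:ℝ) < n := by exact_mod_cast hn
      have hlog : (n:ℝ) * Real.log pmin ≤ Real.log (β1 P h1 n μ μ') := by
        have := Real.log_le_log (by positivity) hlow
        rwa [Real.log_pow] at this
      have hneg : -(1/(n:ℝ)) ≤ 0 := neg_nonpos.mpr (by positivity)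
      calc -(1/(n:ℝ)) * Real.log (β1 P h1 n μ μ')
          ≤ -(1/(n:ℝ)) * ((n:ℝ) * Real.log pmin) := by
            exact mul_le_mul_of_nonpos_left hlog hneg
        _ = -Real.log pmin := by field_simp
    -- eventual lower bound
    have hCpos : (0:ℝ) < F.card := by exact_mod_cast Finset.card_pos.mpr hFne
    have hev1 : ∀ᶠ n : ℕ in Filter.atTop, (K:ℝ) * Real.log ((n:ℝ)+1) / n < η/4 :=
      (o_tendsto K).eventually_lt_const (by linarith)
    have hev2 : ∀ᶠ n : ℕ in Filter.atTop, Real.log (F.card : ℝ) / n < η/4 :=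
      (tendsto_const_div_atTop_nhds_zero_nat _).eventually_lt_const (by linarith)
    have hmain : ∀ᶠ n : ℕ in Filter.atTop,
        θ - η ≤ -(1/(n:ℝ)) * Real.log (β1 P h1 n μ μ') := by
      filter_upwards [hβlow, hev1, hev2, Filter.eventually_gt_atTop 0] with n hlow ho1 ho2 hn
      have hnR : (0:ℝ) < n := by exact_mod_cast hn
      have hβpos : 0 < β1 P h1 n μ μ' := lt_of_lt_of_le (by positivity) hlow
      -- upper bound on β1
      have hup : β1 P h1 n μ μ'
          ≤ (F.card : ℝ) * (((n:ℝ)+1)^K * Real.exp (-(n:ℝ) * (θ - η/2))) := by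
        refine (beta1_le_main P h1 hP hpos hn μ μ').trans ?_
        calc ∑ m ∈ F, ((n+1:ℝ))^K * Real.exp (-(n:ℝ) * sInf {d : ℝ | ∃ Q : 𝒳 × 𝒴₁ → ℝ, IsPMF Q
              ∧ (∀ a, |mX Q a - mX (P m) a| ≤ μ) ∧ (∀ b, |mY1 Q b - mY1 (P m) b| ≤ μ')
              ∧ d = klD Q (P h1)})
            ≤ ∑ m ∈ F, ((n+1:ℝ))^K * Real.exp (-(n:ℝ) * (θ - η/2)) := by
              refine Finset.sum_le_sum fun m hm => ?_
              refine mul_le_mul_of_nonneg_left ?_ (by positivity)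
              refine Real.exp_le_exp.mpr ?_
              have := hSr m hm
              nlinarith [hnR.le]
          _ = (F.card : ℝ) * (((n:ℝ)+1)^K * Real.exp (-(n:ℝ) * (θ - η/2))) := by
              rw [Finset.sum_const, nsmul_eq_mul]
      have hlogup : Real.log (β1 P h1 n μ μ')
          ≤ Real.log (F.card : ℝ) + (K:ℝ) * Real.log ((n:ℝ)+1) + (-(n:ℝ) * (θ - η/2)) := by
        have h1' := Real.log_le_log hβpos hup
        rw [Real.log_mul (ne_of_gt hCpos) (by positivity),
          Real.log_mul (by positivity) (ne_of_gt (Real.exp_pos _)),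
          Real.log_pow, Real.log_exp] at h1'
        calc Real.log (β1 P h1 n μ μ') ≤ _ := h1'
          _ = _ := by push_cast; ring
      -- divide
      have : -(1/(n:ℝ)) * Real.log (β1 P h1 n μ μ')
          ≥ -(1/(n:ℝ)) * (Real.log (F.card : ℝ) + (K:ℝ) * Real.log ((n:ℝ)+1)
              + (-(n:ℝ) * (θ - η/2))) := by
        have hneg : -(1/(n:ℝ)) ≤ 0 := neg_nonpos.mpr (by positivity)
        exact mul_le_mul_of_nonpos_left hlogup hneg
      have heq : -(1/(n:ℝ)) * (Real.log (F.card : ℝ) + (K:ℝ) * Real.log ((n:ℝ)+1)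
            + (-(n:ℝ) * (θ - η/2)))
          = (θ - η/2) - Real.log (F.card : ℝ)/n - (K:ℝ) * Real.log ((n:ℝ)+1)/n := by
        field_simp
        ring
      rw [heq] at this
      linarith
    exact Filter.le_liminf_of_le (Filter.isCoboundedUnder_ge_of_eventually_le _ hub) hmain
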